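/- There is an absolute constant C > 0 such that for every directed graph G on n vertices and every integer β ≥ 1, there exists a shortcut set H ⊆ TC(G) with hopbound β and size |H| ≤ C · n²/β². -/

import Mathlib

open scoped Classical

/-- An edge of a directed graph on vertex set `Fin n`. -/
abbrev Edge (n : ℕ) := Fin n × Fin n

/-- `l` is a directed path in the graph with edge set `E`:
a sequence of distinct vertices, each consecutive pair joined by an edge. -/
def IsPathList {n : ℕ} (E : Set (Edge n)) (l : List (Fin n)) : Prop :=
  l.Nodup ∧ l.Chain' (fun a b => (a, b) ∈ E)

/-- `l` is a directed path from `u` to `v` in the graph with edge set `E`. -/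
def IsPathFromTo {n : ℕ} (E : Set (Edge n)) (u v : Fin n) (l : List (Fin n)) : Prop :=
  IsPathList E l ∧ l.head? = some u ∧ l.getLast? = some v

/-- `hdist E u v` is the minimum number of edges on a directed path from `u` to `v`
(`⊤` if no such path exists). -/
noncomputable def hdist {n : ℕ} (E : Set (Edge n)) (u v : Fin n) : ℕ∞ :=
  sInf {k : ℕ∞ | ∃ l : List (Fin n), IsPathFromTo E u v l ∧ (l.length : ℕ∞) = k + 1}

/-- `(u, v)` is in the transitive closure: `u ≠ v` and `v` is reachable from `u`. -/
def TCrel {n : ℕ} (E : Set (Edge n)) (u v : Fin n) : Prop :=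
  u ≠ v ∧ ∃ l : List (Fin n), IsPathFromTo E u v l

/-- The transitive closure of the graph with edge set `E`, as a set of pairs. -/
def TCset {n : ℕ} (E : Set (Edge n)) : Set (Edge n) := {p | TCrel E p.1 p.2}

/-- `H` is a shortcut set with hopbound `β` for the graph with edge set `E`. -/
def IsShortcutSet {n : ℕ} (E H : Set (Edge n)) (β : ℕ) : Prop :=
  H ⊆ TCset E ∧ ∀ p ∈ TCset E, hdist (E ∪ H) p.1 p.2 ≤ (β : ℕ∞)

/-! ### Walks -/

def IsWalkFromTo {n : ℕ} (E : Set (Edge n)) (u v : Fin n) (l : List (Fin n)) : Prop :=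
  l.Chain' (fun a b => (a, b) ∈ E) ∧ l.head? = some u ∧ l.getLast? = some v

variable {n : ℕ} {E E' : Set (Edge n)} {u v w : Fin n}

lemma IsWalkFromTo.ne_nil {l : List (Fin n)} (h : IsWalkFromTo E u v l) : l ≠ [] := by
  rintro rfl; simp [IsWalkFromTo] at h

lemma IsPathFromTo.toWalk {l : List (Fin n)} (h : IsPathFromTo E u v l) :
    IsWalkFromTo E u v l := ⟨h.1.2, h.2.1, h.2.2⟩

lemma walk_append {l₁ l₂ : List (Fin n)} (h₁ : IsWalkFromTo E u v l₁)
    (h₂ : IsWalkFromTo E v w l₂) :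
    IsWalkFromTo E u w (l₁ ++ l₂.tail) ∧
      (l₁ ++ l₂.tail).length + 1 = l₁.length + l₂.length := by
  obtain ⟨c₂, hd₂, lt₂⟩ := h₂
  obtain ⟨a, t, rfl⟩ : ∃ a t, l₂ = a :: t := by
    cases l₂ with
    | nil => simp at hd₂
    | cons a t => exact ⟨a, t, rfl⟩
  have hav : a = v := by simpa using hd₂
  subst hav
  rcases eq_or_ne t [] with rfl | ht
  · have : a = w := by simpa using lt₂
    subst this
    refine ⟨by simpa using h₁, by simp⟩
  · have hjunc : ∀ x ∈ l₁.getLast?, ∀ y ∈ t.head?, (x, y) ∈ E := by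
      intro x hx y hy
      rw [h₁.2.2] at hx
      simp at hx; subst hx
      unfold List.Chain' at c₂; rw [List.isChain_cons] at c₂
      exact c₂.1 y hy
    have hlt : t.getLast? = some w := by
      rw [List.getLast?_cons] at lt₂
      cases h : t.getLast? with
      | none => exact absurd (List.getLast?_eq_none_iff.1 h) ht
      | some x => rw [h] at lt₂; simpa using lt₂
    refine ⟨⟨List.isChain_append.2 ⟨h₁.1, c₂.tail, hjunc⟩, ?_, ?_⟩, by simp; omega⟩
    · rw [List.head?_append, h₁.2.1]; rfl
    · rw [List.tail_cons, List.getLast?_append, hlt]; rfl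

lemma getLast?_cons_ne {α : Type*} (a : α) {t : List α} (ht : t ≠ []) :
    (a :: t).getLast? = t.getLast? := by
  cases t with
  | nil => simp at ht
  | cons b s => exact List.getLast?_cons_cons ..

lemma eq_cons_of_head? {α : Type*} {l : List α} {u : α} (h : l.head? = some u) :
    ∃ t, l = u :: t := by
  cases l with
  | nil => simp at h
  | cons a t => simp at h; exact ⟨t, by rw [h]⟩

lemma walk_to_path_aux : ∀ (N : ℕ) (l : List (Fin n)) (u v : Fin n), l.length ≤ N →
    IsWalkFromTo E u v l →
    ∃ p, IsPathFromTo E u v p ∧ p.length ≤ l.length ∧ ∀ x ∈ p, x ∈ l := by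
  intro N
  induction N with
  | zero => intro l u v hl hw; exact absurd (List.length_eq_zero_iff.1 (Nat.le_zero.1 hl)) hw.ne_nil
  | succ N ih =>
    intro l u v hl hw
    obtain ⟨c, hd, lt⟩ := hw
    obtain ⟨t, rfl⟩ := eq_cons_of_head? hd
    by_cases ha : u ∈ t
    · obtain ⟨t₁, t₂, rfl⟩ := List.append_of_mem ha
      have hsuf : (u :: t₂) <:+ u :: (t₁ ++ u :: t₂) := ⟨u :: t₁, by simp⟩
      have hne : (t₁ ++ u :: t₂ : List (Fin n)) ≠ [] := by simp
      have hw' : IsWalkFromTo E u v (u :: t₂) := by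
        refine ⟨c.suffix hsuf, by simp, ?_⟩
        rw [getLast?_cons_ne _ hne] at lt
        rcases eq_or_ne t₂ [] with rfl | ht₂
        · simpa [List.getLast?_append] using lt
        · rw [getLast?_cons_ne _ ht₂]
          rw [List.getLast?_append, getLast?_cons_ne _ ht₂] at lt
          cases h : t₂.getLast? with
          | none => exact absurd (List.getLast?_eq_none_iff.1 h) ht₂
          | some x => rw [h] at lt; simpa using lt
      have hlen : (u :: t₂).length ≤ N := by simp at hl ⊢; omega
      obtain ⟨p, hp, hpl, hps⟩ := ih _ u v hlen hw'
      refine ⟨p, hp, by simp at hpl ⊢; omega, fun x hx => ?_⟩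
      have := hps x hx
      simp at this ⊢
      tauto
    · rcases eq_or_ne t [] with rfl | ht
      · have : u = v := by simpa using lt
        subst this
        exact ⟨[u], ⟨⟨by simp, List.isChain_singleton _⟩, by simp, by simp⟩, by simp, by simp⟩
      · have hlast : t.getLast? = some v := by rwa [getLast?_cons_ne _ ht] at lt
        obtain ⟨b, s, rfl⟩ : ∃ b s, t = b :: s := by
          cases t with
          | nil => simp at ht
          | cons b s => exact ⟨b, s, rfl⟩
        have hw' : IsWalkFromTo E b v (b :: s) := ⟨c.tail, by simp, hlast⟩
        obtain ⟨p, hp, hpl, hps⟩ := ih _ b v (by simpa using hl) hw'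
        have hup : u ∉ p := fun h => ha (hps u h)
        obtain ⟨q, hq⟩ := eq_cons_of_head? hp.2.1
        refine ⟨u :: p, ⟨⟨?_, ?_⟩, by simp, ?_⟩, by simpa using hpl, ?_⟩
        · simp only [List.nodup_cons]
          exact ⟨hup, hp.1.1⟩
        · rw [hq]; unfold List.Chain'; rw [List.isChain_cons_cons]
          exact ⟨(List.isChain_cons_cons.1 c).1, hq ▸ hp.1.2⟩
        · have hpne : p ≠ [] := by rw [hq]; simp
          rw [getLast?_cons_ne _ hpne]
          exact hp.2.2
        · intro x hx
          simp at hx ⊢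
          rcases hx with rfl | h
          · left; rfl
          · have := hps x h
            simp at this; tauto

lemma walk_to_path {l : List (Fin n)} (hw : IsWalkFromTo E u v l) :
    ∃ p, IsPathFromTo E u v p ∧ p.length ≤ l.length ∧ ∀ x ∈ p, x ∈ l :=
  walk_to_path_aux l.length l u v le_rfl hw

lemma hdist_le_of_walk {l : List (Fin n)} {k : ℕ} (hw : IsWalkFromTo E u v l)
    (hl : l.length ≤ k + 1) : hdist E u v ≤ (k : ℕ∞) := by
  obtain ⟨p, hp, hpl, -⟩ := walk_to_path hw
  have hpne : p.length ≠ 0 := by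
    intro h
    exact hp.toWalk.ne_nil (List.length_eq_zero_iff.1 h)
  have hmem : ((p.length - 1 : ℕ) : ℕ∞) ∈
      {k : ℕ∞ | ∃ l : List (Fin n), IsPathFromTo E u v l ∧ (l.length : ℕ∞) = k + 1} := by
    refine ⟨p, hp, ?_⟩
    have hp1 : p.length = (p.length - 1) + 1 := by omega
    exact_mod_cast congrArg (Nat.cast : ℕ → ℕ∞) hp1
  calc hdist E u v ≤ ((p.length - 1 : ℕ) : ℕ∞) := sInf_le hmem
    _ ≤ (k : ℕ∞) := by
        rw [Nat.cast_le]
        omega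

lemma hdist_le_iff {k : ℕ} :
    hdist E u v ≤ (k : ℕ∞) ↔ ∃ l, IsWalkFromTo E u v l ∧ l.length ≤ k + 1 := by
  constructor
  · intro h
    by_contra hc
    push_neg at hc
    have : (k : ℕ∞) + 1 ≤ hdist E u v := by
      apply le_sInf
      rintro m ⟨l, hl, hlen⟩
      by_contra hm
      push_neg at hm
      have hmk : m ≤ (k : ℕ∞) := by
        exact Order.le_of_lt_add_one hm
      have hllen : l.length ≤ k + 1 := by
        have : (l.length : ℕ∞) ≤ (k : ℕ∞) + 1 := by rw [hlen]; exact add_le_add_left hmk 1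
        exact_mod_cast this
      exact absurd (hc l hl.toWalk) (not_lt.2 hllen)
    have h3 : ((k + 1 : ℕ) : ℕ∞) ≤ ((k : ℕ) : ℕ∞) := by push_cast; exact this.trans h
    exact absurd (Nat.cast_le.1 h3) (by omega)
  · rintro ⟨l, hw, hl⟩
    exact hdist_le_of_walk hw hl

lemma hdist_anti (hE : E ⊆ E') : hdist E' u v ≤ hdist E u v := by
  apply sInf_le_sInf
  rintro m ⟨l, hl, hlen⟩
  exact ⟨l, ⟨⟨hl.1.1, hl.1.2.imp fun a b h => hE h⟩, hl.2⟩, hlen⟩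

section seg

variable {l : List (Fin n)} {d : Fin n}

lemma getD_adj (hc : l.Chain' (fun a b => (a, b) ∈ E)) {i : ℕ} (h : i + 1 < l.length) :
    (l.getD i d, l.getD (i + 1) d) ∈ E := by
  rw [List.getD_eq_getElem l d (by omega), List.getD_eq_getElem l d h]
  have := List.isChain_iff_getElem.1 hc i (by omega)
  simpa using this

lemma getD_inj (hnd : l.Nodup) {i j : ℕ} (hi : i < l.length) (hj : j < l.length)
    (h : l.getD i d = l.getD j d) : i = j := by
  rw [List.getD_eq_getElem l d hi, List.getD_eq_getElem l d hj] at h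
  have := List.nodup_iff_injective_get.1 hnd (a₁ := ⟨i, hi⟩) (a₂ := ⟨j, hj⟩) (by simpa using h)
  simpa using this

/-- The contiguous segment of `l` from index `x` to index `y`. -/
def seg (l : List (Fin n)) (d : Fin n) (x y : ℕ) : List (Fin n) :=
  (List.range (y - x + 1)).map (fun t => l.getD (x + t) d)

lemma seg_length (x y : ℕ) : (seg l d x y).length = y - x + 1 := by simp [seg]

lemma seg_walk (hc : l.Chain' (fun a b => (a, b) ∈ E)) {x y : ℕ} (hxy : x ≤ y)
    (hy : y < l.length) :
    IsWalkFromTo E (l.getD x d) (l.getD y d) (seg l d x y) := by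
  refine ⟨?_, ?_, ?_⟩
  · rw [seg]; unfold List.Chain'; rw [List.isChain_map]
    rw [show y - x + 1 = (y - x) + 1 from rfl, List.isChain_range_succ]
    intro m hm
    rw [show x + (m + 1) = (x + m) + 1 from by ring]
    exact getD_adj hc (by omega)
  · rw [seg, List.head?_map]
    rw [show y - x + 1 = (y - x) + 1 from rfl, List.range_succ_eq_map]
    simp
  · rw [seg, List.getLast?_map]
    rw [show y - x + 1 = (y - x) + 1 from rfl, List.range_succ]
    rw [List.getLast?_concat]
    simp [Nat.add_sub_cancel' hxy]

lemma seg_nodup (hnd : l.Nodup) {x y : ℕ} (hxy : x ≤ y) (hy : y < l.length) :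
    (seg l d x y).Nodup := by
  apply List.Nodup.map_on
  · intro a ha b hb hab
    simp [List.mem_range] at ha hb
    have := getD_inj (d := d) hnd (i := x + a) (j := x + b) (by omega) (by omega) hab
    omega
  · exact List.nodup_range

lemma seg_path (hc : l.Chain' (fun a b => (a, b) ∈ E)) (hnd : l.Nodup) {x y : ℕ}
    (hxy : x ≤ y) (hy : y < l.length) :
    IsPathFromTo E (l.getD x d) (l.getD y d) (seg l d x y) :=
  ⟨⟨seg_nodup hnd hxy hy, (seg_walk hc hxy hy).1⟩, (seg_walk hc hxy hy).2.1,
    (seg_walk (d := d) hc hxy hy).2.2⟩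

end seg

/-! ### Reachability -/

def Reach (E : Set (Edge n)) (x y : Fin n) : Prop := ∃ l, IsWalkFromTo E x y l

lemma reach_refl (x : Fin n) : Reach E x x := ⟨[x], List.isChain_singleton _, by simp, by simp⟩

lemma reach_trans {x y z : Fin n} (h₁ : Reach E x y) (h₂ : Reach E y z) : Reach E x z := by
  obtain ⟨l₁, h₁⟩ := h₁
  obtain ⟨l₂, h₂⟩ := h₂
  exact ⟨_, (walk_append h₁ h₂).1⟩

lemma reach_of_chain : ∀ (l : List (Fin n)) (x y : Fin n), l.Chain' (Reach E) →
    l.head? = some x → l.getLast? = some y → Reach E x y := by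
  intro l
  induction l with
  | nil => intro x y _ hd _; simp at hd
  | cons a t ih =>
    intro x y hc hd lt
    have hax : a = x := by simpa using hd
    subst hax
    rcases eq_or_ne t [] with rfl | ht
    · have : a = y := by simpa using lt
      subst this; exact reach_refl a
    · obtain ⟨b, s, rfl⟩ : ∃ b s, t = b :: s := by
        cases t with
        | nil => simp at ht
        | cons b s => exact ⟨b, s, rfl⟩
      have h1 : Reach E a b := (List.isChain_cons_cons.1 hc).1
      have h2 : Reach E b y := ih b y (List.isChain_cons_cons.1 hc).2 (by simp)
        (by rwa [getLast?_cons_ne _ ht] at lt)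
      exact reach_trans h1 h2

lemma TCset_union_eq {F : Set (Edge n)}
    (hF : ∀ p ∈ F, ∃ lp, IsPathFromTo E p.1 p.2 lp) : TCset (E ∪ F) = TCset E := by
  ext p
  constructor
  · rintro ⟨hne, l, hl⟩
    refine ⟨hne, ?_⟩
    have hcr : l.Chain' (Reach E) := by
      refine hl.1.2.imp fun a b hab => ?_
      rcases hab with h | h
      · exact ⟨[a, b], List.isChain_pair.2 h, by simp, by simp⟩
      · obtain ⟨lp, hlp⟩ := hF (a, b) h
        exact ⟨lp, hlp.toWalk⟩
    obtain ⟨w, hw⟩ := reach_of_chain l p.1 p.2 hcr hl.2.1 hl.2.2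
    obtain ⟨q, hq, -, -⟩ := walk_to_path hw
    exact ⟨q, hq⟩
  · rintro ⟨hne, l, hl⟩
    exact ⟨hne, l, ⟨⟨hl.1.1, hl.1.2.imp fun a b h => Or.inl h⟩, hl.2⟩⟩

lemma getD_zero_of_head {l : List (Fin n)} (h : l.head? = some u) : l.getD 0 u = u := by
  obtain ⟨t, rfl⟩ := eq_cons_of_head? h
  simp

lemma getD_last_of_getLast {l : List (Fin n)} {d : Fin n} (h : l.getLast? = some v) :
    l.getD (l.length - 1) d = v := by
  have hne : l ≠ [] := by rintro rfl; simp at h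
  have hL : l.length - 1 < l.length := by
    have : l.length ≠ 0 := fun h0 => hne (List.length_eq_zero_iff.1 h0)
    omega
  rw [List.getD_eq_getElem l d hL]
  have h2 := l.getLast?_eq_getElem?
  rw [h, List.getElem?_eq_getElem hL] at h2
  exact (Option.some_injective _ h2).symm

lemma subwalk_min {l : List (Fin n)} (hp : IsPathFromTo E u v l)
    (hmin : ∀ p, IsPathFromTo E u v p → l.length ≤ p.length)
    {i j : ℕ} (hij : i < j) (hj : j ≤ l.length - 1) {w : List (Fin n)}
    (hw : IsWalkFromTo E (l.getD i u) (l.getD j u) w) : j - i + 1 ≤ w.length := by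
  by_contra hcon
  push_neg at hcon
  set L := l.length - 1 with hLdef
  have hlne : l ≠ [] := hp.toWalk.ne_nil
  have hlpos : 1 ≤ l.length := by
    have : l.length ≠ 0 := fun h0 => hlne (List.length_eq_zero_iff.1 h0)
    omega
  have hg0 : l.getD 0 u = u := getD_zero_of_head hp.2.1
  have hgL : l.getD L u = v := getD_last_of_getLast hp.2.2
  have W1 := seg_walk (E := E) (d := u) hp.1.2 (Nat.zero_le i) (by omega)
  rw [hg0] at W1
  have A := walk_append W1 hw
  have W2 := seg_walk (E := E) (d := u) hp.1.2 hj (by omega)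
  rw [hgL] at W2
  have B := walk_append A.1 W2
  have hwpos : 1 ≤ w.length := by
    have : w ≠ [] := hw.ne_nil
    have : w.length ≠ 0 := fun h0 => this (List.length_eq_zero_iff.1 h0)
    omega
  have hlenB : (seg l u 0 i ++ w.tail ++ (seg l u j L).tail).length ≤ L := by
    have e1 := A.2
    have e2 := B.2
    rw [seg_length] at e1 e2
    omega
  obtain ⟨p, hpp, hple, -⟩ := walk_to_path B.1
  have := hmin p hpp
  omega

/-- The set of "far" pairs. -/
def setN (T : ℕ) (E : Set (Edge n)) : Set (Edge n) := {p | (T : ℕ∞) < hdist E p.1 p.2}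

lemma key {β : ℕ} (hβ : 64 ≤ β) : ∀ (N : ℕ) (E : Set (Edge n)),
    (setN (2 * (β / 8)) E).ncard ≤ N →
    ∃ H : Set (Edge n), H ⊆ TCset E ∧
      (∀ p ∈ TCset E, hdist (E ∪ H) p.1 p.2 ≤ (β : ℕ∞)) ∧
      β ^ 2 * H.ncard ≤ 4096 * N := by
  intro N
  induction N using Nat.strong_induction_on with
  | _ N ih =>
    intro E hN
    set s := β / 8 with hsdef
    have hs8 : 8 ≤ s := by omega
    have hs1 : 8 * s ≤ β := by omega
    have hs2 : β ≤ 8 * s + 7 := by omega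
    by_cases hbase : ∀ p ∈ TCset E, hdist E p.1 p.2 ≤ (β : ℕ∞)
    · refine ⟨∅, by simp, ?_, by simp⟩
      intro p hp
      rw [Set.union_empty]
      exact hbase p hp
    · push_neg at hbase
      obtain ⟨p₀, hp₀, hfar⟩ := hbase
      obtain ⟨u, v⟩ := p₀
      simp only at hfar
      -- minimal path from u to v
      have hSne : {m : ℕ | ∃ l, IsPathFromTo E u v l ∧ l.length = m}.Nonempty := by
        obtain ⟨-, l, hl⟩ := hp₀
        exact ⟨l.length, l, hl, rfl⟩
      obtain ⟨l, hl, hlen⟩ := Nat.sInf_mem hSne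
      have hmin : ∀ p, IsPathFromTo E u v p → l.length ≤ p.length := by
        intro p hp
        rw [hlen]
        exact Nat.sInf_le ⟨p, hp, rfl⟩
      set L := l.length - 1 with hLdef
      have hlpos : 1 ≤ l.length := by
        have h0 : l ≠ [] := hl.toWalk.ne_nil
        have : l.length ≠ 0 := fun hh => h0 (List.length_eq_zero_iff.1 hh)
        omega
      have hdlL : hdist E u v ≤ (L : ℕ∞) :=
        hdist_le_of_walk hl.toWalk (by omega)
      have hβL : β + 1 ≤ L := by
        by_contra hc
        push_neg at hc
        have : (L : ℕ∞) ≤ (β : ℕ∞) := by exact_mod_cast Nat.lt_succ_iff.1 hc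
        exact absurd (hfar.trans_le (hdlL.trans this)) (lt_irrefl _)
      set g : ℕ → Fin n := fun i => l.getD i u with hgdef
      set q := L / s with hqdef
      set h2 := L / 2 with hh2def
      set k := (L + 2 - h2) / 2 with hkdef
      have hqs : q * s ≤ L := Nat.div_mul_le_self L s
      have hk4 : L + 1 ≤ 4 * k := by omega
      have hkL : k ≤ L := by omega
      have hk1 : 1 ≤ k := by omega
      -- lower bound on distances between far-apart vertices of the path
      have hsub : ∀ i j : ℕ, i < j → j ≤ L →
          ¬ hdist E (g i) (g j) ≤ ((j - i - 1 : ℕ) : ℕ∞) := by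
        intro i j hij hj hle
        obtain ⟨w, hw, hwlen⟩ := hdist_le_iff.1 hle
        have := subwalk_min hl hmin hij hj hw
        omega
      -- the shortcut edges along the path
      set F : Set (Edge n) :=
        (fun ab : ℕ × ℕ => (g (ab.1 * s), g (ab.2 * s))) ''
          {ab : ℕ × ℕ | ab.1 < ab.2 ∧ ab.2 ≤ q} with hFdef
      have hFsub : F ⊆ TCset E := by
        rintro - ⟨⟨a, b⟩, ⟨hab, hbq⟩, rfl⟩
        show (g (a * s), g (b * s)) ∈ TCset E
        have hbL : b * s ≤ L := le_trans (Nat.mul_le_mul_right s hbq) hqs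
        have haL : a * s < b * s := by
          apply Nat.mul_lt_mul_right (by omega) |>.2 hab
        refine ⟨fun hne => ?_, seg l u (a * s) (b * s), seg_path hl.1.2 hl.1.1 (le_of_lt haL) (by omega)⟩
        have := getD_inj (d := u) hl.1.1 (i := a * s) (j := b * s) (by omega) (by omega) hne
        omega
      have hFpaths : ∀ p ∈ F, ∃ lp, IsPathFromTo E p.1 p.2 lp := by
        intro p hp
        obtain ⟨-, lp, hlp⟩ := hFsub hp
        exact ⟨lp, hlp⟩
      -- the consumed pairs
      set D : Set (Edge n) :=
        (fun ab : ℕ × ℕ => (g ab.1, g ab.2)) ''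
          ↑(Finset.Iio k ×ˢ Finset.Icc (L + 1 - k) L) with hDdef
      have hrect : ∀ i j : ℕ, i < k → L + 1 - k ≤ j → j ≤ L → 4 * s ≤ j - i ∧ i < j := by
        intro i j hik hjk hjL
        constructor <;> omega
      have hDsub : D ⊆ setN (2 * s) E := by
        rintro - ⟨⟨i, j⟩, hmem, rfl⟩
        rw [Finset.mem_coe, Finset.mem_product, Finset.mem_Iio, Finset.mem_Icc] at hmem
        obtain ⟨hg1, hg2⟩ := hrect i j hmem.1 hmem.2.1 hmem.2.2
        show ((2 * s : ℕ) : ℕ∞) < hdist E (g i) (g j)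
        have := hsub i j hg2 hmem.2.2
        calc ((2 * s : ℕ) : ℕ∞) ≤ ((j - i - 1 : ℕ) : ℕ∞) := by
              rw [Nat.cast_le]; omega
          _ < hdist E (g i) (g j) := not_le.1 this
      have hDgood : ∀ i j : ℕ, i < k → L + 1 - k ≤ j → j ≤ L →
          hdist (E ∪ F) (g i) (g j) ≤ ((2 * s : ℕ) : ℕ∞) := by
        intro i j hik hjk hjL
        obtain ⟨hg1, hg2⟩ := hrect i j hik hjk hjL
        set a := i / s + 1 with hadef
        set b := j / s with hbdef
        have hdmi := Nat.div_add_mod i s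
        have hdmj := Nat.div_add_mod j s
        have hmi : i % s < s := Nat.mod_lt _ (by omega)
        have hmj : j % s < s := Nat.mod_lt _ (by omega)
        have has : a * s = s * (i / s) + s := by rw [hadef]; ring
        have hbs : b * s = s * (j / s) := by rw [hbdef]; ring
        have hia : i < a * s := by rw [has]; omega
        have hia2 : a * s ≤ i + s := by rw [has]; omega
        have hjb : b * s ≤ j := by rw [hbs]; omega
        have hjb2 : j < b * s + s := by rw [hbs]; omega
        have habs : a * s < b * s := by rw [has, hbs]; omega
        have hab : a < b := (Nat.mul_lt_mul_right (by omega : 0 < s)).1 habs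
        have hbq : b ≤ q := (Nat.le_div_iff_mul_le (by omega : 0 < s)).2 (by omega)
        have hasL : a * s ≤ L := by rw [has]; omega
        have hc' : l.Chain' (fun x y => (x, y) ∈ E ∪ F) :=
          hl.1.2.imp fun _ _ h => Or.inl h
        have W1 := seg_walk (E := E ∪ F) (d := u) hc' (le_of_lt hia) (by omega)
        have W2 : IsWalkFromTo (E ∪ F) (g (a * s)) (g (b * s)) [g (a * s), g (b * s)] :=
          ⟨List.isChain_pair.2 (Or.inr ⟨(a, b), ⟨hab, hbq⟩, rfl⟩), by simp, by simp⟩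
        have W3 := seg_walk (E := E ∪ F) (d := u) hc' hjb (by omega)
        have A := walk_append W1 W2
        have B := walk_append A.1 W3
        apply hdist_le_of_walk B.1
        have e1 := A.2
        have e2 := B.2
        rw [seg_length] at e1 e2
        simp only [List.length_cons, List.length_nil] at e1
        omega
      -- cardinality computations
      have hinj : Set.InjOn (fun ab : ℕ × ℕ => (g ab.1, g ab.2))
          ↑(Finset.Iio k ×ˢ Finset.Icc (L + 1 - k) L) := by
        rintro ⟨i, j⟩ hij ⟨i', j'⟩ hij' heq
        rw [Finset.mem_coe, Finset.mem_product, Finset.mem_Iio, Finset.mem_Icc] at hij hij'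
        simp only [Prod.mk.injEq] at heq ⊢
        constructor
        · exact getD_inj hl.1.1 (by omega) (by omega) heq.1
        · exact getD_inj hl.1.1 (by omega) (by omega) heq.2
      have hDcard : D.ncard = k * k := by
        rw [hDdef, Set.ncard_image_of_injOn hinj, Set.ncard_coe_finset,
          Finset.card_product, Nat.card_Iio, Nat.card_Icc]
        have hIcc : L + 1 - (L + 1 - k) = k := by omega
        rw [hIcc]
      have hFcard : F.ncard ≤ (q + 1) * (q + 1) := by
        have hbsub : {ab : ℕ × ℕ | ab.1 < ab.2 ∧ ab.2 ≤ q} ⊆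
            ↑(Finset.Iio (q + 1) ×ˢ Finset.Iio (q + 1)) := by
          rintro ⟨x, y⟩ ⟨hxy, hyq⟩
          rw [Finset.mem_coe, Finset.mem_product, Finset.mem_Iio, Finset.mem_Iio]
          omega
        have hbfin : {ab : ℕ × ℕ | ab.1 < ab.2 ∧ ab.2 ≤ q}.Finite :=
          Set.Finite.subset (Finset.Iio (q + 1) ×ˢ Finset.Iio (q + 1)).finite_toSet hbsub
        calc F.ncard ≤ {ab : ℕ × ℕ | ab.1 < ab.2 ∧ ab.2 ≤ q}.ncard :=
              Set.ncard_image_le hbfin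
          _ ≤ (↑(Finset.Iio (q + 1) ×ˢ Finset.Iio (q + 1)) : Set (ℕ × ℕ)).ncard :=
              Set.ncard_le_ncard hbsub (Finset.Iio (q + 1) ×ˢ Finset.Iio (q + 1)).finite_toSet
          _ = (q + 1) * (q + 1) := by
              rw [Set.ncard_coe_finset, Finset.card_product, Nat.card_Iio]
      have hmono : setN (2 * s) (E ∪ F) ⊆ setN (2 * s) E \ D := by
        intro p hp
        have hpN : p ∈ setN (2 * s) E :=
          lt_of_lt_of_le hp (hdist_anti Set.subset_union_left)
        refine ⟨hpN, ?_⟩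
        rintro ⟨⟨i, j⟩, hmem, rfl⟩
        rw [Finset.mem_coe, Finset.mem_product, Finset.mem_Iio, Finset.mem_Icc] at hmem
        have := hDgood i j hmem.1 hmem.2.1 hmem.2.2
        exact absurd hp (not_lt.2 this)
      have hkN : k * k ≤ N := by
        rw [← hDcard]
        exact le_trans (Set.ncard_le_ncard hDsub (Set.toFinite _)) hN
      have hcard' : (setN (2 * s) (E ∪ F)).ncard ≤ N - k * k := by
        calc (setN (2 * s) (E ∪ F)).ncard ≤ (setN (2 * s) E \ D).ncard :=
              Set.ncard_le_ncard hmono (Set.toFinite _)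
          _ = (setN (2 * s) E).ncard - D.ncard :=
              Set.ncard_diff hDsub (Set.toFinite _)
          _ ≤ N - k * k := by
              have h5 := hN
              omega
      obtain ⟨H', hH'sub, hH'hop, hH'card⟩ := ih (N - k * k) (by have h6 := Nat.mul_le_mul hk1 hk1; omega) (E ∪ F) hcard'
      have hTCeq : TCset (E ∪ F) = TCset E := TCset_union_eq hFpaths
      refine ⟨F ∪ H', ?_, ?_, ?_⟩
      · exact Set.union_subset hFsub (hTCeq ▸ hH'sub)
      · intro p hp
        rw [← hTCeq] at hp
        have := hH'hop p hp
        rwa [Set.union_assoc] at this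
      · have hqβ : (q + 1) * β ≤ 64 * k := by
          calc (q + 1) * β ≤ (q + 1) * (9 * s) := Nat.mul_le_mul_left _ (by omega)
            _ = 9 * (q * s) + 9 * s := by ring
            _ ≤ 64 * k := by omega
        have h1 : β ^ 2 * F.ncard ≤ β ^ 2 * ((q + 1) * (q + 1)) :=
          Nat.mul_le_mul_left _ hFcard
        have h2 : β ^ 2 * ((q + 1) * (q + 1)) = ((q + 1) * β) * ((q + 1) * β) := by ring
        have h3 : ((q + 1) * β) * ((q + 1) * β) ≤ (64 * k) * (64 * k) :=
          Nat.mul_le_mul hqβ hqβ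
        have h4 : (64 * k) * (64 * k) = 4096 * (k * k) := by ring
        calc β ^ 2 * (F ∪ H').ncard ≤ β ^ 2 * (F.ncard + H'.ncard) :=
              Nat.mul_le_mul_left _ (Set.ncard_union_le F H')
          _ = β ^ 2 * F.ncard + β ^ 2 * H'.ncard := by ring
          _ ≤ 4096 * (k * k) + 4096 * (N - k * k) := add_le_add (by omega) hH'card
          _ = 4096 * N := by omega

lemma ncard_le_sq {n : ℕ} (H : Set (Edge n)) : H.ncard ≤ n * n := by
  calc H.ncard ≤ (Set.univ : Set (Edge n)).ncard :=
        Set.ncard_le_ncard (Set.subset_univ H) (Set.toFinite _)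
    _ = n * n := by
        rw [Set.ncard_univ]
        simp [Nat.card_eq_fintype_card]

/-- **folklore trade-off.** There is an absolute constant `C > 0` such that
every directed graph on `n` vertices and every integer `β ≥ 1` admit a shortcut set
`H ⊆ TC(G)` with hopbound `β` and size `|H| ≤ C · n²/β²`. -/
theorem folklore_shortcut_tradeoff :
    ∃ C : ℝ, 0 < C ∧
      ∀ (n : ℕ) (E : Set (Edge n)) (β : ℕ), 1 ≤ β →
        ∃ H : Set (Edge n), IsShortcutSet E H β ∧
          (H.ncard : ℝ) ≤ C * (n : ℝ) ^ 2 / (β : ℝ) ^ 2 := by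
  refine ⟨4096, by norm_num, ?_⟩
  intro n E β hβ
  have hmain : ∃ H : Set (Edge n), IsShortcutSet E H β ∧ β ^ 2 * H.ncard ≤ 4096 * (n * n) := by
    rcases le_or_gt β 64 with hb | hb
    · refine ⟨TCset E, ⟨subset_rfl, ?_⟩, ?_⟩
      · intro p hp
        have hw : IsWalkFromTo (E ∪ TCset E) p.1 p.2 [p.1, p.2] :=
          ⟨List.isChain_pair.2 (Or.inr hp), by simp, by simp⟩
        calc hdist (E ∪ TCset E) p.1 p.2 ≤ ((1 : ℕ) : ℕ∞) :=
              hdist_le_of_walk hw (by simp)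
          _ ≤ (β : ℕ∞) := Nat.cast_le.2 hβ
      · have h1 : β ^ 2 ≤ 4096 := by nlinarith
        exact Nat.mul_le_mul h1 (ncard_le_sq _)
    · obtain ⟨H, hsub, hhop, hcard⟩ :=
        key (le_of_lt hb) (setN (2 * (β / 8)) E).ncard E le_rfl
      refine ⟨H, ⟨hsub, hhop⟩, ?_⟩
      calc β ^ 2 * H.ncard ≤ 4096 * (setN (2 * (β / 8)) E).ncard := hcard
        _ ≤ 4096 * (n * n) := Nat.mul_le_mul_left _ (ncard_le_sq _)
  obtain ⟨H, hH, hnat⟩ := hmain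
  refine ⟨H, hH, ?_⟩
  have hβpos : (0 : ℝ) < (β : ℝ) ^ 2 := by positivity
  rw [le_div_iff₀ hβpos]
  calc (H.ncard : ℝ) * (β : ℝ) ^ 2 = ((β ^ 2 * H.ncard : ℕ) : ℝ) := by push_cast; ring
    _ ≤ ((4096 * (n * n) : ℕ) : ℝ) := Nat.cast_le.2 hnat
    _ = 4096 * (n : ℝ) ^ 2 := by push_cast; ring
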